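/- Let Ĵ₁, Ĵ₂, Ĵ₃, D, h be real numbers, Λ := diag(Ĵ₂+Ĵ₃, Ĵ₁+Ĵ₃, Ĵ₁+Ĵ₂) with all diagonal entries nonzero, (q₀,q₁,q₂,q₃) ∈ ℝ⁴, q := (q₁,q₂,q₃). Suppose σ ∈ ℝ is nonzero and satisfies σ = h + D·q₀·⟨γ, q⟩, where γ, γ̃ ∈ ℝ³ are defined by γ = (2/σ)·((Ĵ₂+Ĵ₃)q₀q₁ + (Ĵ₂−Ĵ₃)q₂q₃, (Ĵ₁+Ĵ₃)q₀q₂ + (Ĵ₃−Ĵ₁)q₁q₃, (Ĵ₁+Ĵ₂)q₀q₃ + (Ĵ₁−Ĵ₂)q₁q₂) and γ̃ = (2/σ)·((Ĵ₂+Ĵ₃)q₀q₁ − (Ĵ₂−Ĵ₃)q₂q₃, (Ĵ₁+Ĵ₃)q₀q₂ − (Ĵ₃−Ĵ₁)q₁q₃, (Ĵ₁+Ĵ₂)q₀q₃ − (Ĵ₁−Ĵ₂)q₁q₂). Then σ = h + (D·σ/4)·⟨γ, Λ⁻¹(γ̃+γ)⟩ and moreover σ·(1 − (D/8)·⟨γ̃+γ,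 Λ⁻¹(γ̃+γ)⟩) = h. -/

import Mathlib

set_option maxHeartbeats 1000000

open Matrix

/-- Determination of the factor `σ` in Proposition 4 (formula (sigmas)): the scalar
`σ` of the Euler-parameter form of the reduced discrete Chaplygin sphere map
satisfies `σ = h + (Dσ/4)⟨γ, Λ⁻¹(γ̃+γ)⟩` and
`σ (1 − (D/8)⟨γ̃+γ, Λ⁻¹(γ̃+γ)⟩) = h`. -/
theorem discrete_chaplygin_sigma
    (J1 J2 J3 D h : ℝ)
    (Λ : Matrix (Fin 3) (Fin 3) ℝ)
    (hΛ : Λ = Matrix.diagonal ![J2 + J3, J1 + J3, J1 + J2])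
    (h1 : J2 + J3 ≠ 0) (h2 : J1 + J3 ≠ 0) (h3 : J1 + J2 ≠ 0)
    (q0 q1 q2 q3 : ℝ) (q : Fin 3 → ℝ) (hq : q = ![q1, q2, q3])
    (σ : ℝ) (hσ : σ ≠ 0)
    (γ γt : Fin 3 → ℝ)
    (hγ : γ = (2/σ) • ![(J2 + J3)*q0*q1 + (J2 - J3)*q2*q3,
                        (J1 + J3)*q0*q2 + (J3 - J1)*q1*q3,
                        (J1 + J2)*q0*q3 + (J1 - J2)*q1*q2])
    (hγt : γt = (2/σ) • ![(J2 + J3)*q0*q1 - (J2 - J3)*q2*q3,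
                          (J1 + J3)*q0*q2 - (J3 - J1)*q1*q3,
                          (J1 + J2)*q0*q3 - (J1 - J2)*q1*q2])
    (hfix : σ = h + D * q0 * (γ ⬝ᵥ q)) :
    σ = h + (D * σ / 4) * (γ ⬝ᵥ (Λ⁻¹ *ᵥ (γt + γ))) ∧
    σ * (1 - (D/8) * ((γt + γ) ⬝ᵥ (Λ⁻¹ *ᵥ (γt + γ)))) = h := by
  have hinv : Λ⁻¹ = Matrix.diagonal ![(J2 + J3)⁻¹, (J1 + J3)⁻¹, (J1 + J2)⁻¹] := by
    apply Matrix.inv_eq_right_inv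
    rw [hΛ, Matrix.diagonal_mul_diagonal]
    ext i j
    fin_cases i <;> fin_cases j <;>
      simp [Matrix.diagonal, Matrix.one_apply, mul_inv_cancel₀, h1, h2, h3]
  set S : ℝ := (J2+J3)*q1^2 + (J1+J3)*q2^2 + (J1+J2)*q3^2 with hS
  have e1 : γ ⬝ᵥ q = (2/σ) * q0 * S := by
    subst hγ hq
    simp only [dotProduct, Fin.sum_univ_three, Pi.smul_apply, smul_eq_mul,
      Matrix.cons_val_zero, Matrix.cons_val_one, Matrix.head_cons,
      Matrix.cons_val_two, Matrix.tail_cons, hS]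
    ring
  have e2 : γ ⬝ᵥ (Λ⁻¹ *ᵥ (γt + γ)) = (8/σ^2) * q0^2 * S := by
    subst hγ hγt
    simp only [hinv, dotProduct, Matrix.mulVec_diagonal, Fin.sum_univ_three,
      Pi.add_apply, Pi.smul_apply, smul_eq_mul,
      Matrix.cons_val_zero, Matrix.cons_val_one, Matrix.head_cons,
      Matrix.cons_val_two, Matrix.tail_cons, hS]
    field_simp
    ring
  have e3 : (γt + γ) ⬝ᵥ (Λ⁻¹ *ᵥ (γt + γ)) = (16/σ^2) * q0^2 * S := by
    subst hγ hγt
    simp only [hinv, dotProduct, Matrix.mulVec_diagonal, Fin.sum_univ_three,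
      Pi.add_apply, Pi.smul_apply, smul_eq_mul,
      Matrix.cons_val_zero, Matrix.cons_val_one, Matrix.head_cons,
      Matrix.cons_val_two, Matrix.tail_cons, hS]
    field_simp
    ring
  rw [e1] at hfix
  rw [e2, e3]
  field_simp at hfix ⊢
  constructor
  · linear_combination 4 * hfix
  · linear_combination 8 * hfix
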